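/- For all real x with 0 ≤ x ≤ 1, Φ_{00}(x) = 1 − x; and for every natural number l ≥ 1 and all real x with 0 ≤ x ≤ 1, Φ_{l0}(x) = ( P_{l−1}(2x − 1) − P_{l+1}(2x − 1) ) / ( 2 √(2l+1) ). -/

import Mathlib

open Real MeasureTheory

/-- The degree-`k` Legendre polynomial via the Rodrigues formula
`P_k(t) = (1/(2^k k!)) (d/dt)^k (t² - 1)^k`. -/
noncomputable def legendreP (k : ℕ) (t : ℝ) : ℝ :=
  (1 / ((2 : ℝ) ^ k * (Nat.factorial k : ℝ))) *
    (Polynomial.derivative^[k] (((Polynomial.X : Polynomial ℝ) ^ 2 - 1) ^ k)).eval t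

/-- The scaling functions `φ_k(x) = √(2k+1) P_k(2x-1)` on `[0,1]`, extended by zero. -/
noncomputable def scalingFn (k : ℕ) (x : ℝ) : ℝ :=
  if x ∈ Set.Icc (0:ℝ) 1 then Real.sqrt (2 * (k : ℝ) + 1) * legendreP k (2 * x - 1) else 0

/-- The cross-correlation functions `Φ_{ii'}(x) = ∫ φ_i(x+y) φ_{i'}(y) dy`. -/
noncomputable def crossCorr (i i' : ℕ) (x : ℝ) : ℝ :=
  ∫ y : ℝ, scalingFn i (x + y) * scalingFn i' y

open Polynomial

/-- `Q k = (X² - 1)^k`, the polynomial in the Rodrigues formula. -/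
noncomputable def rodQ (k : ℕ) : ℝ[X] := ((Polynomial.X : Polynomial ℝ) ^ 2 - 1) ^ k

lemma rodL1 (n : ℕ) (p : ℝ[X]) :
    derivative^[n] (X * p) = X * derivative^[n] p + (n : ℝ[X]) * derivative^[n-1] p := by
  induction n generalizing p with
  | zero => simp
  | succ n ih =>
    rw [Function.iterate_succ_apply', ih, derivative_add, derivative_mul, derivative_mul,
      derivative_X, derivative_natCast]
    match n with
    | 0 => simp; ring
    | Nat.succ m =>
      rw [show (m+1+1) - 1 = m + 1 from rfl, show (m+1) - 1 = m from rfl,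
        ← Function.iterate_succ_apply' derivative m p, ← Function.iterate_succ_apply' derivative (m+1) p]
      push_cast
      ring

lemma rodL2 (n : ℕ) (p : ℝ[X]) :
    derivative^[n] (((X:ℝ[X])^2 - 1) * p) = ((X:ℝ[X])^2 - 1) * derivative^[n] p
      + 2 * (n : ℝ[X]) * (X * derivative^[n-1] p)
      + (n : ℝ[X]) * ((n : ℝ[X]) - 1) * derivative^[n-2] p := by
  have h : ((X:ℝ[X])^2 - 1) * p = X * (X * p) - p := by ring
  rw [h, iterate_derivative_sub, rodL1 n (X * p), rodL1 n p, rodL1 (n-1) p]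
  match n with
  | 0 => simp; ring
  | 1 => simp; ring
  | Nat.succ (Nat.succ m) =>
    rw [show (m+2) - 1 = m + 1 from rfl, show (m+1) - 1 = m from rfl,
      show (m+2) - 2 = m from rfl]
    push_cast
    ring

lemma rodQsucc (m : ℕ) : rodQ (m+1) = ((X:ℝ[X])^2 - 1) * rodQ m := by
  rw [rodQ, rodQ, pow_succ]; ring

lemma rodDerivQ (m : ℕ) : derivative (rodQ (m+1)) = ((2*m+2 : ℕ) : ℝ[X]) * (X * rodQ m) := by
  rw [rodQ, derivative_pow]
  push_cast
  simp [rodQ, map_ofNat]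
  ring

lemma rodDA (k n : ℕ) : derivative^[k+1] (rodQ (n+1)) =
    ((2*n+2 : ℕ) : ℝ[X]) * (X * derivative^[k] (rodQ n) + (k:ℝ[X]) * derivative^[k-1] (rodQ n)) := by
  rw [Function.iterate_succ_apply, rodDerivQ, iterate_derivative_natCast_mul, rodL1]

lemma rodCS1 (r : ℕ) (p : ℝ[X]) :
    2*(r:ℝ[X]) * (X * derivative^[r-1] (derivative p)) = 2*(r:ℝ[X]) * (X * derivative^[r] p) := by
  match r with
  | 0 => simp
  | Nat.succ n => rw [show n+1-1 = n from rfl, ← Function.iterate_succ_apply]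

lemma rodCS2 (r : ℕ) (p : ℝ[X]) :
    (r:ℝ[X])*((r:ℝ[X])-1) * derivative^[r-2] (derivative p)
      = (r:ℝ[X])*((r:ℝ[X])-1) * derivative^[r-1] p := by
  match r with
  | 0 => simp
  | 1 => norm_num
  | Nat.succ (Nat.succ n) =>
    rw [show n+2-2 = n from rfl, show n+2-1 = n+1 from rfl, ← Function.iterate_succ_apply]

lemma rodODE2 (r : ℕ) : ((X:ℝ[X])^2 - 1) * derivative^[r+1] (rodQ (r+1)) =
    2*(X * derivative^[r] (rodQ (r+1))) + (r:ℝ[X])*((r:ℝ[X])+3) * derivative^[r-1] (rodQ (r+1)) := by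
  have base : ((X:ℝ[X])^2 - 1) * derivative (rodQ (r+1)) = ((2*r+2 : ℕ) : ℝ[X]) * (X * rodQ (r+1)) := by
    rw [rodDerivQ, rodQsucc]; ring
  have h := congrArg (derivative^[r]) base
  rw [rodL2 r _, iterate_derivative_natCast_mul, rodL1 r, rodCS1, rodCS2,
    ← Function.iterate_succ_apply derivative r (rodQ (r+1))] at h
  push_cast at h ⊢
  linear_combination h

lemma rodSTAR (m : ℕ) : X * derivative^[m+1] (rodQ (m+1)) =
    ((m:ℝ[X])+2) * derivative^[m] (rodQ (m+1)) + (2*(m:ℝ[X])+2) * derivative^[m] (rodQ m) := by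
  match m with
  | 0 =>
    simp [rodQ, rodDerivQ 0, map_ofNat]
    ring
  | Nat.succ m =>
    simp only [Nat.succ_eq_add_one]
    have h1 := rodDA (m+1) (m+1)
    have h2 := rodDA m (m+1)
    have h3 := rodODE2 m
    push_cast at h1 h2 h3 ⊢
    linear_combination X * h1 - ((m:ℝ[X])+3) * h2 + (2*(m:ℝ[X])+4) * h3

lemma rodKEY (m : ℕ) : derivative^[m+2] (rodQ (m+2)) =
    (2*(m:ℝ[X])+4)*((2*(m:ℝ[X])+3) * derivative^[m] (rodQ (m+1))
      + (2*(m:ℝ[X])+2) * derivative^[m] (rodQ m)) := by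
  have h1 := rodDA (m+1) (m+1)
  have h2 := rodSTAR m
  push_cast at h1 h2 ⊢
  linear_combination h1 + (2*(m:ℝ[X])+4) * h2

lemma rodDvdDeriv (n : ℕ) (p : ℝ[X]) (h : (X - 1)^(n+1) ∣ p) : (X - 1)^n ∣ derivative p := by
  obtain ⟨r, rfl⟩ := h
  refine ⟨((n:ℝ[X])+1) * r + (X - 1) * derivative r, ?_⟩
  rw [derivative_mul, derivative_pow]
  push_cast
  simp
  ring

lemma rodEvalIterDerivZero (k : ℕ) : ∀ (p : ℝ[X]), (X - 1)^(k+1) ∣ p →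
    ((derivative^[k]) p).eval 1 = 0 := by
  induction k with
  | zero =>
    rintro p ⟨r, rfl⟩
    simp
  | succ k ih =>
    intro p h
    rw [Function.iterate_succ_apply]
    exact ih _ (rodDvdDeriv _ _ h)

lemma rodEvalOneZero (m : ℕ) : ((derivative^[m]) (rodQ (m+1))).eval 1 = 0 :=
  rodEvalIterDerivZero m _ ⟨(X+1)^(m+1), by rw [rodQ, ← mul_pow]; congr 1; ring⟩

lemma legendreP_eq (k : ℕ) (t : ℝ) :
    legendreP k t = (1 / ((2:ℝ)^k * (Nat.factorial k : ℝ))) * (derivative^[k] (rodQ k)).eval t := rfl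

lemma legendreP_zero (t : ℝ) : legendreP 0 t = 1 := by
  simp [legendreP]

lemma crossCorr_eq_interval (l : ℕ) {x : ℝ} (hx0 : 0 ≤ x) (hx1 : x ≤ 1) :
    crossCorr l 0 x = ∫ y in (0:ℝ)..(1-x), Real.sqrt (2*(l:ℝ)+1) * legendreP l (2*(x+y)-1) := by
  have hiff : ∀ y : ℝ, ((x+y) ∈ Set.Icc (0:ℝ) 1 ∧ y ∈ Set.Icc (0:ℝ) 1) ↔ y ∈ Set.Icc (0:ℝ) (1-x) := by
    intro y
    simp only [Set.mem_Icc]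
    constructor
    · rintro ⟨⟨-, h2⟩, ⟨h3, -⟩⟩; exact ⟨h3, by linarith⟩
    · rintro ⟨h1, h2⟩; exact ⟨⟨by linarith, by linarith⟩, ⟨h1, by linarith⟩⟩
  have hfun : (fun y => scalingFn l (x + y) * scalingFn 0 y)
      = (Set.Icc (0:ℝ) (1-x)).indicator
          (fun y => Real.sqrt (2*(l:ℝ)+1) * legendreP l (2*(x+y)-1)) := by
    funext y
    simp only [scalingFn, Set.indicator_apply]
    by_cases h : y ∈ Set.Icc (0:ℝ) (1-x)
    · have hh := (hiff y).mpr h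
      rw [if_pos hh.1, if_pos hh.2, if_pos h, legendreP_zero]
      norm_num
    · rw [if_neg h]
      by_cases h1 : (x+y) ∈ Set.Icc (0:ℝ) 1
      · by_cases h2 : y ∈ Set.Icc (0:ℝ) 1
        · exact absurd ((hiff y).mp ⟨h1, h2⟩) h
        · rw [if_neg h2, mul_zero]
      · rw [if_neg h1, zero_mul]
  rw [crossCorr, hfun, MeasureTheory.integral_indicator measurableSet_Icc,
    MeasureTheory.integral_Icc_eq_integral_Ioc,
    ← intervalIntegral.integral_of_le (by linarith : (0:ℝ) ≤ 1 - x)]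

lemma crossCorr_succ (m : ℕ) {x : ℝ} (hx0 : 0 ≤ x) (hx1 : x ≤ 1) :
    crossCorr (m+1) 0 x =
      (legendreP m (2*x-1) - legendreP (m+2) (2*x-1)) /
        (2 * Real.sqrt (2*((m+1:ℕ):ℝ)+1)) := by
  rw [crossCorr_eq_interval (m+1) hx0 hx1]
  set p : ℝ[X] := derivative^[m] (rodQ (m+1)) with hp
  set c : ℝ := Real.sqrt (2*((m+1:ℕ):ℝ)+1) / ((2:ℝ)^(m+1) * ((m+1).factorial : ℝ) * 2) with hc
  have h2p : ((2:ℝ)^(m+1)) ≠ 0 := by positivity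
  have hfac : (((m+1).factorial : ℝ)) ≠ 0 := by positivity
  have hG : ∀ y : ℝ, HasDerivAt (fun y => c * p.eval (2*(x+y)-1))
      (Real.sqrt (2*((m+1:ℕ):ℝ)+1) * legendreP (m+1) (2*(x+y)-1)) y := by
    intro y
    have haff : HasDerivAt (fun y : ℝ => 2*(x+y)-1) 2 y := by
      simpa using (((hasDerivAt_id y).const_add x).const_mul 2).sub_const 1
    have h1 := ((p.hasDerivAt (2*(x+y)-1)).comp y haff).const_mul c
    refine h1.congr_deriv ?_; symm
    rw [hp, ← Function.iterate_succ_apply' derivative m (rodQ (m+1)), legendreP_eq, hc]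
    field_simp
  have hcont : Continuous fun y : ℝ => Real.sqrt (2*((m+1:ℕ):ℝ)+1) * legendreP (m+1) (2*(x+y)-1) := by
    simp only [legendreP_eq]
    exact continuous_const.mul (continuous_const.mul
      ((Polynomial.continuous _).comp (by continuity)))
  rw [intervalIntegral.integral_eq_sub_of_hasDerivAt (fun y _ => hG y)
    (hcont.intervalIntegrable _ _)]
  have e1 : 2*(x+(1-x))-1 = 1 := by ring
  have e2 : 2*(x+0)-1 = 2*x-1 := by ring
  rw [e1, e2, rodEvalOneZero m, mul_zero, zero_sub]
  -- final algebra
  have hKey := congrArg (Polynomial.eval (2*x-1)) (rodKEY m)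
  simp only [eval_mul, eval_add, eval_natCast, eval_ofNat] at hKey
  rw [← hp] at hKey
  rw [legendreP_eq, legendreP_eq, hc]
  set S := Real.sqrt (2*((m+1:ℕ):ℝ)+1) with hS
  have hsq : S^2 = 2*(m:ℝ)+3 := by
    rw [hS, Real.sq_sqrt (by positivity)]; push_cast; ring
  have hspos : (0:ℝ) < S := Real.sqrt_pos.mpr (by positivity)
  have hfm : ((m.factorial : ℝ)) ≠ 0 := by positivity
  have hf1 : (((m+1).factorial : ℝ)) = ((m:ℝ)+1) * (m.factorial : ℝ) := by
    rw [Nat.factorial_succ]; push_cast; ring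
  have hf2 : (((m+2).factorial : ℝ)) = ((m:ℝ)+2) * (((m:ℝ)+1) * (m.factorial : ℝ)) := by
    rw [Nat.factorial_succ (m+1)]; push_cast [hf1]; ring
  set E := Polynomial.eval (2*x-1) p with hEdef
  set A := Polynomial.eval (2*x-1) (derivative^[m] (rodQ m)) with hAdef
  rw [hKey, hf1, hf2, pow_succ, pow_succ, pow_succ]
  field_simp
  linear_combination (-(E*(2*(m:ℝ)+4))) * hsq

/-- Connection with (Gegenbauer, equivalently differences of) Legendre polynomials:
on `[0,1]`, `Φ_{00}(x) = 1 - x` and, for `l ≥ 1`,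
`Φ_{l0}(x) = (P_{l-1}(2x-1) - P_{l+1}(2x-1)) / (2 √(2l+1))`. -/
theorem crossCorr_l0_formula :
    (∀ x : ℝ, 0 ≤ x → x ≤ 1 → crossCorr 0 0 x = 1 - x) ∧
    (∀ l : ℕ, 1 ≤ l → ∀ x : ℝ, 0 ≤ x → x ≤ 1 →
      crossCorr l 0 x =
        (legendreP (l - 1) (2 * x - 1) - legendreP (l + 1) (2 * x - 1)) /
          (2 * Real.sqrt (2 * (l : ℝ) + 1))) := by
  constructor
  · intro x hx0 hx1
    rw [crossCorr_eq_interval 0 hx0 hx1]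
    simp [legendreP_zero]
  · intro l hl x hx0 hx1
    obtain ⟨m, rfl⟩ : ∃ m, l = m + 1 := ⟨l-1, (Nat.succ_pred_eq_of_pos hl).symm⟩
    rw [show m+1-1 = m from rfl]
    exact crossCorr_succ m hx0 hx1
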